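/- arXiv:1204.0243 — 2 statements merged into one kernel-verified Lean document; each statement's English description precedes it below -/
import Mathlib

section
/- For any constant θ ∈ ℝ, the function G : ℂ → 𝔻 defined by G(u + iv) := (cosh θ · sinh(2u) + i·sinh θ)/(1 + cosh θ · cosh(2u)) takes values in the open unit disc and satisfies the translator equation (Gauss): G_{zz̄} + 2·(conj(G)|G|²/(1 − |G|⁴))·G_z·G_z̄ + 2·(G/(1 − |G|⁴))·|G_z̄|² = 0 at every point of ℂ. -/
open Complex ComplexConjugate

/-- Wirtinger derivative `∂h/∂z = ½(∂h/∂u − i ∂h/∂v)` of a map `h : ℂ → ℂ`. -/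
noncomputable def wz (h : ℂ → ℂ) (z : ℂ) : ℂ :=
  (1 / 2) * (fderiv ℝ h z 1 - Complex.I * fderiv ℝ h z Complex.I)

/-- Wirtinger derivative `∂h/∂z̄ = ½(∂h/∂u + i ∂h/∂v)` of a map `h : ℂ → ℂ`. -/
noncomputable def wzb (h : ℂ → ℂ) (z : ℂ) : ℂ :=
  (1 / 2) * (fderiv ℝ h z 1 + Complex.I * fderiv ℝ h z Complex.I)

/-- Wirtinger derivative `∂x/∂z` of a real-valued map `x : ℂ → ℝ`. -/
noncomputable def wzR (x : ℂ → ℝ) (z : ℂ) : ℂ :=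
  (1 / 2) * (((fderiv ℝ x z 1 : ℝ) : ℂ) - Complex.I * ((fderiv ℝ x z Complex.I : ℝ) : ℂ))

/-- The translator equation (Gauss) for `G : Ω → 𝔻`:
`G_{zz̄} + 2(conj(G)|G|²/(1 − |G|⁴))·G_z·G_z̄ + 2(G/(1 − |G|⁴))·|G_z̄|² = 0`. -/
def GaussEq (G : ℂ → ℂ) (z : ℂ) : Prop :=
  wz (wzb G) z
    + 2 * (conj (G z) * (Complex.normSq (G z) : ℂ)
        / (1 - (Complex.normSq (G z) : ℂ) ^ 2)) * wz G z * wzb G z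
    + 2 * (G z / (1 - (Complex.normSq (G z) : ℂ) ^ 2)) * (Complex.normSq (wzb G z) : ℂ) = 0

/-- The null curve `φ = (2·conj(G)_z/(|G|⁴ − 1))·(1 − G², i(1 + G²), 2G)` in `ℂ³`. -/
noncomputable def phi3 (G : ℂ → ℂ) (z : ℂ) : Fin 3 → ℂ :=
  ![(2 * wz (fun w => conj (G w)) z / ((Complex.normSq (G z) : ℂ) ^ 2 - 1)) * (1 - (G z) ^ 2),
    (2 * wz (fun w => conj (G w)) z / ((Complex.normSq (G z) : ℂ) ^ 2 - 1))
      * (Complex.I * (1 + (G z) ^ 2)),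
    (2 * wz (fun w => conj (G w)) z / ((Complex.normSq (G z) : ℂ) ^ 2 - 1)) * (2 * G z)]


noncomputable def gg (θ : ℝ) (u : ℝ) : ℂ :=
  (((Real.cosh θ * Real.sinh (2 * u) : ℝ) : ℂ) + Complex.I * ((Real.sinh θ : ℝ) : ℂ))
    / (1 + ((Real.cosh θ * Real.cosh (2 * u) : ℝ) : ℂ))

lemma fderiv_comp_re (h : ℝ → ℂ) {d : ℂ} {z : ℂ} (hd : HasDerivAt h d z.re) (c : ℂ) :
    fderiv ℝ (fun w : ℂ => h w.re) z c = c.re • d := by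
  have H : HasFDerivAt (fun w : ℂ => h w.re)
      ((ContinuousLinearMap.smulRight (1 : ℝ →L[ℝ] ℝ) d).comp Complex.reCLM) z :=
    HasFDerivAt.comp z hd.hasFDerivAt Complex.reCLM.hasFDerivAt
  rw [H.fderiv]
  simp

lemma wz_comp_re (h : ℝ → ℂ) {d : ℂ} {z : ℂ} {H : ℂ → ℂ}
    (hH : H = fun w => h w.re) (hd : HasDerivAt h d z.re) :
    wz H z = d / 2 := by
  subst hH
  unfold wz
  rw [fderiv_comp_re h hd, fderiv_comp_re h hd]
  simp
  ring

lemma wzb_comp_re (h : ℝ → ℂ) {d : ℂ} {z : ℂ} {H : ℂ → ℂ}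
    (hH : H = fun w => h w.re) (hd : HasDerivAt h d z.re) :
    wzb H z = d / 2 := by
  subst hH
  unfold wzb
  rw [fderiv_comp_re h hd, fderiv_comp_re h hd]
  simp
  ring

noncomputable def gg1 (θ : ℝ) (u : ℝ) : ℂ :=
  (2 * ((Real.cosh θ : ℝ) : ℂ) *
      ((((Real.cosh (2 * u) : ℝ) : ℂ) + ((Real.cosh θ : ℝ) : ℂ))
        - Complex.I * ((Real.sinh θ : ℝ) : ℂ) * ((Real.sinh (2 * u) : ℝ) : ℂ)))
    / (1 + ((Real.cosh θ * Real.cosh (2 * u) : ℝ) : ℂ)) ^ 2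

lemma den_ne (θ : ℝ) (u : ℝ) :
    (1 + ((Real.cosh θ * Real.cosh (2 * u) : ℝ) : ℂ)) ≠ 0 := by
  have h1 : (0:ℝ) < 1 + Real.cosh θ * Real.cosh (2 * u) := by
    nlinarith [Real.cosh_pos θ, Real.cosh_pos (2*u)]
  have : (1 + ((Real.cosh θ * Real.cosh (2 * u) : ℝ) : ℂ))
      = ((1 + Real.cosh θ * Real.cosh (2 * u) : ℝ) : ℂ) := by push_cast; ring
  rw [this]
  exact_mod_cast h1.ne'

lemma hasDerivAt_sinh2 (u : ℝ) :
    HasDerivAt (fun u : ℝ => Real.sinh (2 * u)) (2 * Real.cosh (2 * u)) u := by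
  have h2u : HasDerivAt (fun u : ℝ => 2 * u) 2 u := by
    simpa using (hasDerivAt_id u).const_mul (2:ℝ)
  simpa [Function.comp_def, mul_comm] using (Real.hasDerivAt_sinh (2*u)).comp u h2u

lemma hasDerivAt_cosh2 (u : ℝ) :
    HasDerivAt (fun u : ℝ => Real.cosh (2 * u)) (2 * Real.sinh (2 * u)) u := by
  have h2u : HasDerivAt (fun u : ℝ => 2 * u) 2 u := by
    simpa using (hasDerivAt_id u).const_mul (2:ℝ)
  simpa [Function.comp_def, mul_comm] using (Real.hasDerivAt_cosh (2*u)).comp u h2u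

lemma hg1 (θ : ℝ) (u : ℝ) : HasDerivAt (gg θ) (gg1 θ u) u := by
  have hx : ((Real.exp θ : ℝ) : ℂ) ≠ 0 := by
    exact_mod_cast (Real.exp_ne_zero θ)
  have hy : ((Real.exp (2*u) : ℝ) : ℂ) ≠ 0 := by
    exact_mod_cast (Real.exp_ne_zero (2*u))
  have hN : HasDerivAt
      (fun u : ℝ => (((Real.cosh θ * Real.sinh (2 * u) : ℝ) : ℂ)
        + Complex.I * ((Real.sinh θ : ℝ) : ℂ)))
      (((Real.cosh θ * (2 * Real.cosh (2 * u)) : ℝ) : ℂ)) u :=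
    (((hasDerivAt_sinh2 u).const_mul (Real.cosh θ)).ofReal_comp).add_const _
  have hD : HasDerivAt
      (fun u : ℝ => (1 + ((Real.cosh θ * Real.cosh (2 * u) : ℝ) : ℂ)))
      (((Real.cosh θ * (2 * Real.sinh (2 * u)) : ℝ) : ℂ)) u :=
    (((hasDerivAt_cosh2 u).const_mul (Real.cosh θ)).ofReal_comp).const_add _
  have raw := hN.div hD (den_ne θ u)
  have hnum :
      (((Real.cosh θ * (2 * Real.cosh (2*u)) : ℝ) : ℂ)) * (1 + ((Real.cosh θ * Real.cosh (2*u) : ℝ) : ℂ))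
        - (((Real.cosh θ * Real.sinh (2*u) : ℝ) : ℂ) + Complex.I * ((Real.sinh θ : ℝ) : ℂ))
            * (((Real.cosh θ * (2 * Real.sinh (2*u)) : ℝ) : ℂ))
      = 2 * ((Real.cosh θ : ℝ) : ℂ) *
          ((((Real.cosh (2*u) : ℝ) : ℂ) + ((Real.cosh θ : ℝ) : ℂ))
            - Complex.I * ((Real.sinh θ : ℝ) : ℂ) * ((Real.sinh (2*u) : ℝ) : ℂ)) := by
    have hc := Complex.cosh_sq_sub_sinh_sq (2*(u:ℂ))
    push_cast
    linear_combination (2*(Complex.cosh (θ:ℂ))^2) * hc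
  have hval : gg1 θ u =
      ((((Real.cosh θ * (2 * Real.cosh (2*u)) : ℝ) : ℂ)) * (1 + ((Real.cosh θ * Real.cosh (2*u) : ℝ) : ℂ))
        - (((Real.cosh θ * Real.sinh (2*u) : ℝ) : ℂ) + Complex.I * ((Real.sinh θ : ℝ) : ℂ))
            * (((Real.cosh θ * (2 * Real.sinh (2*u)) : ℝ) : ℂ)))
      / (1 + ((Real.cosh θ * Real.cosh (2*u) : ℝ) : ℂ)) ^ 2 := by
    unfold gg1
    rw [hnum]
  rw [hval]
  exact raw

noncomputable def gg2 (θ : ℝ) (u : ℝ) : ℂ :=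
  (4 * ((Real.cosh θ : ℝ) : ℂ) *
      ((((Real.sinh (2*u) : ℝ) : ℂ) - Complex.I * ((Real.sinh θ : ℝ) : ℂ) * ((Real.cosh (2*u) : ℝ) : ℂ))
          * (1 + ((Real.cosh θ : ℝ) : ℂ) * ((Real.cosh (2*u) : ℝ) : ℂ))
        - 2 * ((Real.cosh θ : ℝ) : ℂ) * ((Real.sinh (2*u) : ℝ) : ℂ)
          * ((((Real.cosh (2*u) : ℝ) : ℂ) + ((Real.cosh θ : ℝ) : ℂ))
            - Complex.I * ((Real.sinh θ : ℝ) : ℂ) * ((Real.sinh (2*u) : ℝ) : ℂ))))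
    / (1 + ((Real.cosh θ * Real.cosh (2 * u) : ℝ) : ℂ)) ^ 3

lemma hg2 (θ : ℝ) (u : ℝ) : HasDerivAt (gg1 θ) (gg2 θ u) u := by
  have hM : HasDerivAt
      (fun u : ℝ => 2 * ((Real.cosh θ : ℝ) : ℂ) *
        ((((Real.cosh (2 * u) : ℝ) : ℂ) + ((Real.cosh θ : ℝ) : ℂ))
          - Complex.I * ((Real.sinh θ : ℝ) : ℂ) * ((Real.sinh (2 * u) : ℝ) : ℂ)))
      (2 * ((Real.cosh θ : ℝ) : ℂ) *
        (((2 * Real.sinh (2 * u) : ℝ) : ℂ)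
          - Complex.I * ((Real.sinh θ : ℝ) : ℂ) * ((2 * Real.cosh (2 * u) : ℝ) : ℂ))) u := by
    exact ((((hasDerivAt_cosh2 u).ofReal_comp).add_const _).sub
      (((hasDerivAt_sinh2 u).ofReal_comp).const_mul _)).const_mul _
  have hD : HasDerivAt
      (fun u : ℝ => (1 + ((Real.cosh θ * Real.cosh (2 * u) : ℝ) : ℂ)))
      (((Real.cosh θ * (2 * Real.sinh (2 * u)) : ℝ) : ℂ)) u :=
    (((hasDerivAt_cosh2 u).const_mul (Real.cosh θ)).ofReal_comp).const_add _
  have hD2 : HasDerivAt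
      (fun u : ℝ => (1 + ((Real.cosh θ * Real.cosh (2 * u) : ℝ) : ℂ)) ^ 2)
      (((Real.cosh θ * (2 * Real.sinh (2 * u)) : ℝ) : ℂ)
          * (1 + ((Real.cosh θ * Real.cosh (2 * u) : ℝ) : ℂ))
        + (1 + ((Real.cosh θ * Real.cosh (2 * u) : ℝ) : ℂ))
          * ((Real.cosh θ * (2 * Real.sinh (2 * u)) : ℝ) : ℂ)) u := by
    simp only [pow_two]
    exact hD.mul hD
  refine (hM.div hD2 (pow_ne_zero 2 (den_ne θ u))).congr_deriv ?_
  symm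
  unfold gg2
  have hne := den_ne θ u
  rw [div_eq_div_iff (pow_ne_zero 3 hne) (pow_ne_zero 2 (pow_ne_zero 2 hne))]
  push_cast
  ring

lemma sum3_eq_zero (t1 t2 t3 w2 w3 : ℂ) (h2 : w2 ≠ 0) (h3 : w3 ≠ 0)
    (h : t1*w2*w3 + t2*w3 + t3*w2 = 0) : t1 + t2/w2 + t3/w3 = 0 := by
  have key : (t1 + t2/w2 + t3/w3) * (w2*w3) = t1*w2*w3 + t2*w3 + t3*w2 := by
    field_simp
  have h0 : (t1 + t2/w2 + t3/w3) * (w2*w3) = 0 := by rw [key, h]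
  rcases mul_eq_zero.mp h0 with h' | h'
  · exact h'
  · exact absurd h' (mul_ne_zero h2 h3)

lemma hns (θ u : ℝ) :
    Complex.normSq (gg θ u)
      = (Real.cosh θ * Real.cosh (2*u) - 1) / (Real.cosh θ * Real.cosh (2*u) + 1) := by
  have hb2 : Real.sinh θ ^ 2 = Real.cosh θ ^ 2 - 1 := by
    have := Real.cosh_sq_sub_sinh_sq θ; linarith
  have hs2 : Real.sinh (2*u) ^ 2 = Real.cosh (2*u) ^ 2 - 1 := by
    have := Real.cosh_sq_sub_sinh_sq (2*u); linarith
  have hq : (0:ℝ) < Real.cosh θ * Real.cosh (2*u) :=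
    mul_pos (Real.cosh_pos θ) (Real.cosh_pos (2*u))
  unfold gg
  rw [map_div₀]
  rw [show ((1:ℂ) + ((Real.cosh θ * Real.cosh (2*u) : ℝ) : ℂ))
      = ((1 + Real.cosh θ * Real.cosh (2*u) : ℝ) : ℂ) by push_cast; ring]
  rw [show (((Real.cosh θ * Real.sinh (2*u) : ℝ) : ℂ) + Complex.I * ((Real.sinh θ : ℝ) : ℂ))
      = (((Real.cosh θ * Real.sinh (2*u) : ℝ) : ℂ) + ((Real.sinh θ : ℝ) : ℂ) * Complex.I) by ring]
  rw [Complex.normSq_add_mul_I, Complex.normSq_ofReal]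
  rw [div_eq_div_iff (by nlinarith) (by nlinarith)]
  linear_combination (Real.cosh θ ^ 2 * (Real.cosh θ * Real.cosh (2*u) + 1)) * hs2
    + (Real.cosh θ * Real.cosh (2*u) + 1) * hb2

set_option maxHeartbeats 4000000 in
/-- **(Deformations of the grim reaper cylinder: Gauss map).** For every `θ ∈ ℝ`, the
function `G(u + iv) = (cosh θ sinh(2u) + i sinh θ)/(1 + cosh θ cosh(2u))` takes values
in the open unit disc and satisfies the translator equation (Gauss) on all of `ℂ`. -/
theorem deformed_grim_reaper_gauss (θ : ℝ) :
    (∀ z : ℂ,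
      ‖(((Real.cosh θ * Real.sinh (2 * z.re) : ℝ) : ℂ)
          + Complex.I * ((Real.sinh θ : ℝ) : ℂ))
        / (1 + ((Real.cosh θ * Real.cosh (2 * z.re) : ℝ) : ℂ))‖ < 1)
    ∧ (∀ z : ℂ,
      GaussEq (fun w =>
        ((((Real.cosh θ * Real.sinh (2 * w.re) : ℝ) : ℂ)
            + Complex.I * ((Real.sinh θ : ℝ) : ℂ))
          / (1 + ((Real.cosh θ * Real.cosh (2 * w.re) : ℝ) : ℂ)))) z) := by
  constructor
  · intro z
    show ‖gg θ z.re‖ < 1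
    have hq : (0:ℝ) < Real.cosh θ * Real.cosh (2*z.re) :=
      mul_pos (Real.cosh_pos θ) (Real.cosh_pos (2*z.re))
    have h1 : Complex.normSq (gg θ z.re) < 1 := by
      rw [hns θ z.re, div_lt_one (by linarith)]
      linarith
    nlinarith [Complex.sq_norm (gg θ z.re), norm_nonneg (gg θ z.re)]
  · intro z
    suffices h : GaussEq (fun w => gg θ w.re) z from h
    unfold GaussEq
    have hwzb : wzb (fun w => gg θ w.re) = fun w => gg1 θ w.re / 2 :=
      funext fun w => wzb_comp_re (gg θ) rfl (hg1 θ w.re)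
    rw [hwzb, wz_comp_re (fun u => gg1 θ u / 2) rfl ((hg2 θ z.re).div_const 2),
        wz_comp_re (gg θ) rfl (hg1 θ z.re)]
    simp only []
    rw [hns θ z.re, ← Complex.mul_conj (gg1 θ z.re / 2)]
    have hcoef : (1:ℂ) - (((Real.cosh θ * Real.cosh (2*z.re) - 1)
          / (Real.cosh θ * Real.cosh (2*z.re) + 1) : ℝ) : ℂ)^2
        = ((4*(Real.cosh θ * Real.cosh (2*z.re))
            / (Real.cosh θ * Real.cosh (2*z.re) + 1)^2 : ℝ) : ℂ) := by
      have hq : (0:ℝ) < Real.cosh θ * Real.cosh (2*z.re) :=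
        mul_pos (Real.cosh_pos θ) (Real.cosh_pos (2*z.re))
      have : (1:ℝ) - ((Real.cosh θ * Real.cosh (2*z.re) - 1)
          / (Real.cosh θ * Real.cosh (2*z.re) + 1))^2
        = 4*(Real.cosh θ * Real.cosh (2*z.re))
            / (Real.cosh θ * Real.cosh (2*z.re) + 1)^2 := by
        field_simp
        ring
      exact_mod_cast congrArg (fun r : ℝ => (r : ℂ)) this
    rw [hcoef]
    simp only [gg, gg1, gg2, map_div₀, map_add, map_sub, map_mul, map_one, map_pow,
      map_ofNat, Complex.conj_ofReal, Complex.conj_I]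
    have hD1 : (1:ℂ) + Complex.cosh (θ:ℂ) * Complex.cosh (2*(z.re:ℂ)) ≠ 0 := by
      have h0 : (0:ℝ) < 1 + Real.cosh θ * Real.cosh (2*z.re) := by
        nlinarith [Real.cosh_pos θ, Real.cosh_pos (2*z.re)]
      have : ((1 + Real.cosh θ * Real.cosh (2*z.re) : ℝ) : ℂ) ≠ 0 := by
        exact_mod_cast h0.ne'
      push_cast at this
      convert this using 2
    have hD2 : Complex.cosh (θ:ℂ) * Complex.cosh (2*(z.re:ℂ)) + 1 ≠ 0 := by
      intro h; exact hD1 (by linear_combination h)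
    have hC1 : Complex.cosh (θ:ℂ) ≠ 0 := by
      have : ((Real.cosh θ : ℝ) : ℂ) ≠ 0 := by exact_mod_cast (Real.cosh_pos θ).ne'
      simpa using this
    have hC2 : Complex.cosh (2*(z.re:ℂ)) ≠ 0 := by
      have : ((Real.cosh (2*z.re) : ℝ) : ℂ) ≠ 0 := by
        exact_mod_cast (Real.cosh_pos (2*z.re)).ne'
      push_cast at this
      exact this
    push_cast
    field_simp [hD1, hD2, hC1, hC2]
    have hB : Complex.sinh (θ:ℂ)^2 = Complex.cosh (θ:ℂ)^2 - 1 := by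
      linear_combination -(Complex.cosh_sq_sub_sinh_sq (θ:ℂ))
    have hS : Complex.sinh (2*(z.re:ℂ))^2 = Complex.cosh (2*(z.re:ℂ))^2 - 1 := by
      linear_combination -(Complex.cosh_sq_sub_sinh_sq (2*(z.re:ℂ)))
    have hI : Complex.I^2 = -1 := Complex.I_sq
    linear_combination
      ((-16:ℂ)*(Complex.cosh (θ:ℂ))*(Complex.cosh (2*(z.re:ℂ)))*(Complex.sinh (2*(z.re:ℂ)))*(Complex.I)^2 + (-16:ℂ)*(Complex.cosh (θ:ℂ))^2*(Complex.sinh (2*(z.re:ℂ)))*(Complex.I)^2 + (-16:ℂ)*(Complex.cosh (θ:ℂ))^2*(Complex.sinh (2*(z.re:ℂ)))^3*(Complex.I)^2 + (-16:ℂ)*(Complex.cosh (θ:ℂ))^2*(Complex.sinh (θ:ℂ))*(Complex.cosh (2*(z.re:ℂ)))*(Complex.sinh (2*(z.re:ℂ)))^2*(Complex.I)^3 + (-16:ℂ)*(Complex.cosh (θ:ℂ))^3*(Complex.cosh (2*(z.re:ℂ)))*(Complex.sinh (2*(z.re:ℂ)))^3*(Complex.I)^2 + (16:ℂ)*(Complex.cosh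 (θ:ℂ))^3*(Complex.cosh (2*(z.re:ℂ)))^3*(Complex.sinh (2*(z.re:ℂ)))*(Complex.I)^2 + (-16:ℂ)*(Complex.cosh (θ:ℂ))^3*(Complex.sinh (θ:ℂ))*(Complex.cosh (2*(z.re:ℂ)))^2*(Complex.sinh (2*(z.re:ℂ)))^2*(Complex.I)^3 + (16:ℂ)*(Complex.cosh (θ:ℂ))^4*(Complex.cosh (2*(z.re:ℂ)))^2*(Complex.sinh (2*(z.re:ℂ)))*(Complex.I)^2) * hB
      + ((16:ℂ)*(Complex.cosh (θ:ℂ))^2*(Complex.sinh (2*(z.re:ℂ)))*(Complex.I)^2 + (48:ℂ)*(Complex.cosh (θ:ℂ))^2*(Complex.sinh (θ:ℂ))*(Complex.cosh (2*(z.re:ℂ)))*(Complex.I) + (16:ℂ)*(Complex.cosh (θ:ℂ))^2*(Complex.sinh (θ:ℂ))*(Complex.cosh (2*(z.re:ℂ)))*(Complex.I)^3 + (16:ℂ)*(Complex.cosh (θ:ℂ))^3*(Complex.cosh (2*(z.re:ℂ)))*(Complex.sinh (2*(z.re:ℂ)))*(Complex.I)^2 + (16:ℂ)*(Complex.cosh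 (θ:ℂ))^3*(Complex.sinh (θ:ℂ))*(Complex.I) + (64:ℂ)*(Complex.cosh (θ:ℂ))^3*(Complex.sinh (θ:ℂ))*(Complex.cosh (2*(z.re:ℂ)))^2*(Complex.I) + (16:ℂ)*(Complex.cosh (θ:ℂ))^3*(Complex.sinh (θ:ℂ))*(Complex.cosh (2*(z.re:ℂ)))^2*(Complex.I)^3 + (-16:ℂ)*(Complex.cosh (θ:ℂ))^4*(Complex.sinh (2*(z.re:ℂ)))*(Complex.I)^2 + (-16:ℂ)*(Complex.cosh (θ:ℂ))^4*(Complex.sinh (θ:ℂ))*(Complex.cosh (2*(z.re:ℂ)))*(Complex.I)^3 + (16:ℂ)*(Complex.cosh (θ:ℂ))^4*(Complex.sinh (θ:ℂ))*(Complex.cosh (2*(z.re:ℂ)))^3*(Complex.I) + (-16:ℂ)*(Complex.cosh (θ:ℂ))^5*(Complex.cosh (2*(z.re:ℂ)))*(Complex.sinh (2*(z.re:ℂ)))*(Complex.I)^2 + (-16:ℂ)*(Complex.cosh (θ:ℂ))^5*(Complex.sinh (θ:ℂ))*(Complex.cosh (2*(z.re:ℂ)))^2*(Complex.I) + (-16:ℂ)*(Complex.cosh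 (θ:ℂ))^5*(Complex.sinh (θ:ℂ))*(Complex.cosh (2*(z.re:ℂ)))^2*(Complex.I)^3) * hS
      + ((16:ℂ)*(Complex.cosh (θ:ℂ))*(Complex.cosh (2*(z.re:ℂ)))*(Complex.sinh (2*(z.re:ℂ))) + (16:ℂ)*(Complex.cosh (θ:ℂ))^2*(Complex.cosh (2*(z.re:ℂ)))^2*(Complex.sinh (2*(z.re:ℂ))) + (-16:ℂ)*(Complex.cosh (θ:ℂ))^2*(Complex.sinh (θ:ℂ))*(Complex.cosh (2*(z.re:ℂ)))*(Complex.I) + (16:ℂ)*(Complex.cosh (θ:ℂ))^2*(Complex.sinh (θ:ℂ))*(Complex.cosh (2*(z.re:ℂ)))^3*(Complex.I) + (-32:ℂ)*(Complex.cosh (θ:ℂ))^3*(Complex.cosh (2*(z.re:ℂ)))*(Complex.sinh (2*(z.re:ℂ))) + (-16:ℂ)*(Complex.cosh (θ:ℂ))^3*(Complex.sinh (θ:ℂ))*(Complex.cosh (2*(z.re:ℂ)))^2*(Complex.I) + (16:ℂ)*(Complex.cosh (θ:ℂ))^3*(Complex.sinh (θ:ℂ))*(Complex.cosh (2*(z.re:ℂ)))^4*(Complex.I)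 + (-32:ℂ)*(Complex.cosh (θ:ℂ))^4*(Complex.cosh (2*(z.re:ℂ)))^2*(Complex.sinh (2*(z.re:ℂ))) + (16:ℂ)*(Complex.cosh (θ:ℂ))^4*(Complex.sinh (θ:ℂ))*(Complex.cosh (2*(z.re:ℂ)))*(Complex.I) + (-16:ℂ)*(Complex.cosh (θ:ℂ))^4*(Complex.sinh (θ:ℂ))*(Complex.cosh (2*(z.re:ℂ)))^3*(Complex.I) + (16:ℂ)*(Complex.cosh (θ:ℂ))^5*(Complex.cosh (2*(z.re:ℂ)))*(Complex.sinh (2*(z.re:ℂ))) + (16:ℂ)*(Complex.cosh (θ:ℂ))^5*(Complex.sinh (θ:ℂ))*(Complex.cosh (2*(z.re:ℂ)))^2*(Complex.I) + (-16:ℂ)*(Complex.cosh (θ:ℂ))^5*(Complex.sinh (θ:ℂ))*(Complex.cosh (2*(z.re:ℂ)))^4*(Complex.I) + (16:ℂ)*(Complex.cosh (θ:ℂ))^6*(Complex.cosh (2*(z.re:ℂ)))^2*(Complex.sinh (2*(z.re:ℂ)))) * hI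
end

section
/- On the domain Ω := {z = u + iv ∈ ℂ : u > 1}, the pair of ℂ-valued functions g₁(u + iv) := e^{iv} and g₂(u + iv) := ((u + 1)/(u − 1))·e^{iv} satisfies both the compatibility condition (CP): (g₁)_z̄ / [(1 − g₁·conj(g₂))(1 + |g₁|²)] = (g₂)_z̄ / [(1 − conj(g₁)·g₂)(1 + |g₂|²)], and the integrability condition (Ge1): 0 = (g₁)_{zz̄} + (conj(g₂)/(1 − g₁·conj(g₂)) − conj(g₁)/(1 + |g₁|²))·(g₁)_z·(g₁)_z̄ + ((g₁+g₂)/[(1 − conj(g₁)·g₂)(1 + |g₁|²)])·|(g₁)_z̄|². In particular, the real function 𝒢(u) := (u + 1)/(u − 1) solves the ordinary differential equation 1/2 = (𝒢 − 𝒢′)/(1 + 𝒢²) for u > 1. -/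
open Complex ComplexConjugate

/-- The function `F` appearing in the compatibility condition (CP). -/
noncomputable def Ffun (g₁ g₂ : ℂ → ℂ) (z : ℂ) : ℂ :=
  wzb g₁ z / ((1 - g₁ z * conj (g₂ z)) * (1 + (Complex.normSq (g₁ z) : ℂ)))

/-- The compatibility condition (CP) at a point `z`. -/
def CP (g₁ g₂ : ℂ → ℂ) (z : ℂ) : Prop :=
  Ffun g₁ g₂ z = wzb g₂ z / ((1 - conj (g₁ z) * g₂ z) * (1 + (Complex.normSq (g₂ z) : ℂ)))

/-- The integrability condition (Ge1) at a point `z`. -/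
def Ge1 (g₁ g₂ : ℂ → ℂ) (z : ℂ) : Prop :=
  0 = wz (wzb g₁) z
      + (conj (g₂ z) / (1 - g₁ z * conj (g₂ z))
          - conj (g₁ z) / (1 + (Complex.normSq (g₁ z) : ℂ))) * wz g₁ z * wzb g₁ z
      + ((g₁ z + g₂ z) / ((1 - conj (g₁ z) * g₂ z) * (1 + (Complex.normSq (g₁ z) : ℂ))))
          * (Complex.normSq (wzb g₁ z) : ℂ)

/-- The integrability condition (Ge2) at a point `z`. -/
def Ge2 (g₁ g₂ : ℂ → ℂ) (z : ℂ) : Prop :=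
  0 = wz (wzb g₂) z
      + (conj (g₁ z) / (1 - conj (g₁ z) * g₂ z)
          - conj (g₂ z) / (1 + (Complex.normSq (g₂ z) : ℂ))) * wz g₂ z * wzb g₂ z
      + ((g₁ z + g₂ z) / ((1 - g₁ z * conj (g₂ z)) * (1 + (Complex.normSq (g₂ z) : ℂ))))
          * (Complex.normSq (wzb g₂ z) : ℂ)

noncomputable def MM : ℂ →L[ℝ] ℂ := Complex.ofRealCLM.comp Complex.imCLM

lemma hasF_cexp (c : ℂ) (z : ℂ) :
    HasFDerivAt (fun w : ℂ => c * Complex.exp (Complex.I * w.im))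
    ((c * Complex.I * Complex.exp (Complex.I * z.im)) • MM) z := by
  have h1 : HasFDerivAt (fun w : ℂ => Complex.I * (w.im : ℂ)) (Complex.I • MM) z := by
    have := (Complex.I • MM).hasFDerivAt (x := z)
    convert this using 1
    funext w; simp [MM]
  have h2 := (((Complex.hasDerivAt_exp
      (Complex.I * z.im)).hasFDerivAt.restrictScalars ℝ).comp z h1).const_mul c
  refine h2.congr_fderiv ?_
  ext w
  simp [MM, smul_eq_mul]
  ring

lemma wz_cexp (c : ℂ) (z : ℂ) :
    wz (fun w : ℂ => c * Complex.exp (Complex.I * w.im)) z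
      = (1/2) * c * Complex.exp (Complex.I * z.im) := by
  rw [wz, (hasF_cexp c z).fderiv]
  simp [MM, smul_eq_mul]
  ring_nf
  rw [Complex.I_sq]
  ring

lemma wzb_cexp (c : ℂ) (z : ℂ) :
    wzb (fun w : ℂ => c * Complex.exp (Complex.I * w.im)) z
      = -(1/2) * c * Complex.exp (Complex.I * z.im) := by
  rw [wzb, (hasF_cexp c z).fderiv]
  simp [MM, smul_eq_mul]
  ring_nf
  rw [Complex.I_sq]
  ring

lemma one_mul_funext : (fun w : ℂ => Complex.exp (Complex.I * w.im))
    = (fun w : ℂ => (1:ℂ) * Complex.exp (Complex.I * w.im)) := by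
  funext w; rw [one_mul]

lemma wz_g1 (z : ℂ) : wz (fun w : ℂ => Complex.exp (Complex.I * w.im)) z
    = (1/2) * Complex.exp (Complex.I * z.im) := by
  rw [one_mul_funext, wz_cexp]; ring

lemma wzb_g1 (z : ℂ) : wzb (fun w : ℂ => Complex.exp (Complex.I * w.im)) z
    = -(1/2) * Complex.exp (Complex.I * z.im) := by
  rw [one_mul_funext, wzb_cexp]; ring

lemma wz_wzb_g1 (z : ℂ) : wz (wzb (fun w : ℂ => Complex.exp (Complex.I * w.im))) z
    = -(1/4) * Complex.exp (Complex.I * z.im) := by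
  have hfun : wzb (fun w : ℂ => Complex.exp (Complex.I * w.im))
      = fun w : ℂ => (-(1/2) : ℂ) * Complex.exp (Complex.I * w.im) :=
    funext fun w => wzb_g1 w
  rw [hfun, wz_cexp]; ring

lemma hasDerivAt_G {u : ℝ} (hu : u ≠ 1) :
    HasDerivAt (fun t : ℝ => (t + 1) / (t - 1)) (-2 / (u - 1) ^ 2) u := by
  have hne : u - 1 ≠ 0 := sub_ne_zero.mpr hu
  have h := ((hasDerivAt_id u).add_const 1).div ((hasDerivAt_id u).sub_const 1) hne
  refine h.congr_deriv ?_
  simp only [id]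
  ring

lemma wzb_g2 (z : ℂ) (hz : z.re ≠ 1) :
    wzb (fun w : ℂ => (((w.re + 1) / (w.re - 1) : ℝ) : ℂ) * Complex.exp (Complex.I * w.im)) z
      = (1/2) * (((-2 / (z.re - 1) ^ 2 : ℝ) : ℂ) - (((z.re + 1) / (z.re - 1) : ℝ) : ℂ))
          * Complex.exp (Complex.I * z.im) := by
  have hG := hasDerivAt_G hz
  have hf2 : HasFDerivAt (fun w : ℂ => (((w.re + 1) / (w.re - 1) : ℝ) : ℂ))
      (Complex.ofRealCLM.comp ((-2 / (z.re - 1) ^ 2 : ℝ) • Complex.reCLM)) z := by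
    have h := hG.comp_hasFDerivAt z Complex.reCLM.hasFDerivAt
    exact Complex.ofRealCLM.hasFDerivAt.comp z h
  have hexp : HasFDerivAt (fun w : ℂ => Complex.exp (Complex.I * w.im))
      ((Complex.I * Complex.exp (Complex.I * z.im)) • MM) z := by
    have := hasF_cexp 1 z
    simpa using this
  have hmul : HasFDerivAt (fun w : ℂ => (((w.re + 1) / (w.re - 1) : ℝ) : ℂ)
      * Complex.exp (Complex.I * w.im)) _ z := hf2.mul hexp
  rw [wzb, hmul.fderiv]
  simp [MM, smul_eq_mul]
  ring_nf
  rw [Complex.I_sq]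
  ring

lemma ns_e (v : ℝ) : Complex.normSq (Complex.exp (Complex.I * v)) = 1 := by
  rw [Complex.normSq_eq_norm_sq, Complex.norm_exp]
  simp [Complex.mul_re]

lemma ee_one (v : ℝ) :
    Complex.exp (Complex.I * v) * conj (Complex.exp (Complex.I * v)) = 1 := by
  rw [Complex.mul_conj, ns_e]
  simp

lemma cp_lemma (z : ℂ) (hz : 1 < z.re) :
    CP (fun w => Complex.exp (Complex.I * (w.im : ℂ)))
      (fun w => (((w.re + 1) / (w.re - 1) : ℝ) : ℂ) * Complex.exp (Complex.I * (w.im : ℂ))) z := by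
  have hne : z.re ≠ 1 := ne_of_gt hz
  have hG : (1:ℝ) < (z.re + 1) / (z.re - 1) := by
    rw [lt_div_iff₀ (by linarith)]; linarith
  have he : Complex.exp (Complex.I * z.im) ≠ 0 := Complex.exp_ne_zero _
  have hee := ee_one z.im
  have hA : (1:ℂ) - (((z.re + 1) / (z.re - 1) : ℝ) : ℂ) ≠ 0 := by
    rw [sub_ne_zero]
    exact_mod_cast (ne_of_lt hG)
  have hB : (1:ℂ) + (((z.re + 1) / (z.re - 1) : ℝ) : ℂ)^2 ≠ 0 := by
    have : (0:ℝ) < 1 + ((z.re + 1) / (z.re - 1))^2 := by positivity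
    exact_mod_cast ne_of_gt this
  unfold CP Ffun
  rw [wzb_g1, wzb_g2 z hne]
  simp only [map_mul, Complex.conj_ofReal, Complex.normSq_mul, Complex.normSq_ofReal, ns_e, mul_one]
  have h1 : Complex.exp (Complex.I * z.im) * ((((z.re + 1) / (z.re - 1) : ℝ) : ℂ)
      * conj (Complex.exp (Complex.I * z.im))) = (((z.re + 1) / (z.re - 1) : ℝ) : ℂ) := by
    rw [mul_left_comm, hee, mul_one]
  have h2 : conj (Complex.exp (Complex.I * z.im)) * ((((z.re + 1) / (z.re - 1) : ℝ) : ℂ)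
      * Complex.exp (Complex.I * z.im)) = (((z.re + 1) / (z.re - 1) : ℝ) : ℂ) := by
    rw [mul_left_comm, mul_comm (conj _), hee, mul_one]
  rw [h1, h2]
  have huc : (z.re : ℂ) - 1 ≠ 0 := by
    rw [sub_ne_zero]
    exact_mod_cast hne
  have key : ((-2 / (z.re - 1) ^ 2 : ℝ) : ℂ) - (((z.re + 1) / (z.re - 1) : ℝ) : ℂ)
      = -(1/2) * (1 + (((z.re + 1) / (z.re - 1) : ℝ) : ℂ)^2) := by
    push_cast
    field_simp
    ring
  rw [Complex.ofReal_one, Complex.ofReal_mul, ← sq]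
  rw [div_eq_div_iff (mul_ne_zero hA (by norm_num : (1+1:ℂ) ≠ 0)) (mul_ne_zero hA hB)]
  linear_combination (-(Complex.exp (Complex.I * z.im)
    * (1 - (((z.re + 1) / (z.re - 1) : ℝ) : ℂ)))) * key

lemma ge1_lemma (z : ℂ) (hz : 1 < z.re) :
    Ge1 (fun w => Complex.exp (Complex.I * (w.im : ℂ)))
      (fun w => (((w.re + 1) / (w.re - 1) : ℝ) : ℂ) * Complex.exp (Complex.I * (w.im : ℂ))) z := by
  have hne : z.re ≠ 1 := ne_of_gt hz
  have hG : (1:ℝ) < (z.re + 1) / (z.re - 1) := by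
    rw [lt_div_iff₀ (by linarith)]; linarith
  have he : Complex.exp (Complex.I * z.im) ≠ 0 := Complex.exp_ne_zero _
  have hee := ee_one z.im
  have hA : (1:ℂ) - (((z.re + 1) / (z.re - 1) : ℝ) : ℂ) ≠ 0 := by
    rw [sub_ne_zero]
    exact_mod_cast (ne_of_lt hG)
  unfold Ge1
  rw [wz_wzb_g1, wz_g1, wzb_g1]
  have hns : Complex.normSq (-(1/2) * Complex.exp (Complex.I * z.im)) = 1/4 := by
    rw [Complex.normSq_mul, ns_e]
    simp [Complex.normSq_apply]
    norm_num
  rw [hns]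
  simp only [map_mul, Complex.conj_ofReal, Complex.normSq_mul, Complex.normSq_ofReal, ns_e,
    mul_one, Complex.ofReal_one]
  have h1 : Complex.exp (Complex.I * z.im) * ((((z.re + 1) / (z.re - 1) : ℝ) : ℂ)
      * conj (Complex.exp (Complex.I * z.im))) = (((z.re + 1) / (z.re - 1) : ℝ) : ℂ) := by
    rw [mul_left_comm, hee, mul_one]
  have h2 : conj (Complex.exp (Complex.I * z.im)) * ((((z.re + 1) / (z.re - 1) : ℝ) : ℂ)
      * Complex.exp (Complex.I * z.im)) = (((z.re + 1) / (z.re - 1) : ℝ) : ℂ) := by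
    rw [mul_left_comm, mul_comm (conj _), hee, mul_one]
  rw [h1, h2]
  rw [show ((1/4:ℝ):ℂ) = 1/4 by norm_num]
  set Gc : ℂ := (((z.re + 1) / (z.re - 1) : ℝ) : ℂ) with hGc
  set e : ℂ := Complex.exp (Complex.I * z.im) with hE
  set ec : ℂ := conj (Complex.exp (Complex.I * z.im)) with hEc
  have ht : (1 - Gc) * (1 - Gc)⁻¹ = 1 := mul_inv_cancel₀ hA
  simp only [div_eq_mul_inv, mul_inv]
  linear_combination (-(e/8)) * ht + (Gc*e*(1-Gc)⁻¹/4 - e/8) * hee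


/-- **(Example: the Hamiltonian stationary Lagrangian translator).** On the domain
`Ω = {u + iv : u > 1}`, the pair `g₁ = e^{iv}`, `g₂ = ((u+1)/(u−1))e^{iv}` satisfies the
compatibility condition (CP) and the integrability condition (Ge1); in particular
`𝒢(u) = (u+1)/(u−1)` solves the ODE `1/2 = (𝒢 − 𝒢′)/(1 + 𝒢²)` for `u > 1`. -/
theorem castro_lerma_gauss_map :
    (∀ z ∈ {w : ℂ | 1 < w.re},
      CP (fun w => Complex.exp (Complex.I * (w.im : ℂ)))
        (fun w => (((w.re + 1) / (w.re - 1) : ℝ) : ℂ) * Complex.exp (Complex.I * (w.im : ℂ))) z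
      ∧ Ge1 (fun w => Complex.exp (Complex.I * (w.im : ℂ)))
        (fun w => (((w.re + 1) / (w.re - 1) : ℝ) : ℂ) * Complex.exp (Complex.I * (w.im : ℂ))) z)
    ∧ (∀ u : ℝ, 1 < u →
        (1 / 2 : ℝ)
          = ((fun t : ℝ => (t + 1) / (t - 1)) u - deriv (fun t : ℝ => (t + 1) / (t - 1)) u)
            / (1 + ((fun t : ℝ => (t + 1) / (t - 1)) u) ^ 2)) := by

  constructor
  · intro z hz
    simp only [Set.mem_setOf_eq] at hz
    constructor
    · -- CP
      exact cp_lemma z hz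
    · -- Ge1
      exact ge1_lemma z hz
  · intro u hu
    have h := hasDerivAt_G (ne_of_gt hu)
    rw [h.deriv]
    simp only
    have h1 : u - 1 ≠ 0 := sub_ne_zero.mpr (ne_of_gt hu)
    have h2 : (1:ℝ) + ((u+1)/(u-1))^2 ≠ 0 := by positivity
    rw [eq_div_iff h2]
    field_simp
    ring
end
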